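/- For every ordering σ of the vertices of a graph and every vertex v, the product ⃖d_σ(v)·⃗d_σ(v) equals the number of length-two paths (edge pairs) u–v–w through v such that u precedes v and w succeeds v in σ. Consequently, for a uniformly random ordering σ, the expected value of ∑_{v∈V} ⃖d_σ(v)·⃗d_σ(v) is at least one third of its maximum over all orderings; i.e., a uniformly random vertex ordering is a 3-approximation in expectation for maximizing ∑_{v∈V} ⃖d(v)·⃗d(v). -/

import Mathlib

open Finset

/-- A finite loop-free multigraph: edges indexed by `E`, each with two distinct endpoints. -/
structure Multigraph (V E : Type) where
  fst : E → V
  snd : E → V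
  loopless : ∀ e, fst e ≠ snd e

namespace Multigraph

variable {V E : Type} [Fintype V] [DecidableEq V] [Fintype E] [DecidableEq E]

/-- Head of edge `e` under orientation `o`. -/
def head (G : Multigraph V E) (o : E → Bool) (e : E) : V :=
  if o e then G.fst e else G.snd e

/-- Tail of edge `e` under orientation `o`. -/
def tail (G : Multigraph V E) (o : E → Bool) (e : E) : V :=
  if o e then G.snd e else G.fst e

/-- Indegree of `v` under orientation `o`. -/
def indeg (G : Multigraph V E) (o : E → Bool) (v : V) : ℕ :=
  (Finset.univ.filter (fun e => G.head o e = v)).card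

/-- The orientation `o` contains a directed cycle (a closed directed trail). -/
def HasDicycle (G : Multigraph V E) (o : E → Bool) : Prop :=
  ∃ k : ℕ, ∃ hk : 0 < k, ∃ f : Fin k → E, Function.Injective f ∧
    ∀ i : Fin k, G.head o (f i) = G.tail o (f ⟨(i.val + 1) % k, Nat.mod_lt _ hk⟩)

/-- The orientation `o` is acyclic. -/
def Acyclic (G : Multigraph V E) (o : E → Bool) : Prop := ¬ G.HasDicycle o

/-- Left-degree of `v` in the vertex ordering `σ`. -/
def leftDeg (G : Multigraph V E) (σ : V ≃ Fin (Fintype.card V)) (v : V) : ℕ :=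
  (Finset.univ.filter (fun e =>
    (G.fst e = v ∧ σ (G.snd e) < σ v) ∨ (G.snd e = v ∧ σ (G.fst e) < σ v))).card

/-- Right-degree of `v` in the vertex ordering `σ`. -/
def rightDeg (G : Multigraph V E) (σ : V ≃ Fin (Fintype.card V)) (v : V) : ℕ :=
  (Finset.univ.filter (fun e =>
    (G.fst e = v ∧ σ v < σ (G.snd e)) ∨ (G.snd e = v ∧ σ v < σ (G.fst e)))).card

/-- Degree of `v` in the subgraph induced by `S`. -/
def degIn (G : Multigraph V E) (S : Finset V) (v : V) : ℕ :=
  (Finset.univ.filter (fun e =>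
    (G.fst e = v ∨ G.snd e = v) ∧ G.fst e ∈ S ∧ G.snd e ∈ S)).card

/-- Degree of `v` in `G`. -/
def deg (G : Multigraph V E) (v : V) : ℕ :=
  (Finset.univ.filter (fun e => G.fst e = v ∨ G.snd e = v)).card

/-- The set of vertices appearing at or before `v` in the ordering `σ`. -/
def prefixSet (σ : V ≃ Fin (Fintype.card V)) (v : V) : Finset V :=
  Finset.univ.filter (fun u => σ u ≤ σ v)

end Multigraph

open Multigraph

variable {V E : Type} [Fintype V] [DecidableEq V] [Fintype E] [DecidableEq E]

set_option linter.unusedSectionVars false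

/-- Number of orderings putting `u` before `v` before `w`. -/
def cardF (u v w : V) : ℕ :=
  (Finset.univ.filter (fun σ : V ≃ Fin (Fintype.card V) => σ u < σ v ∧ σ v < σ w)).card

lemma comp_card (g : V ≃ V) (p : (V ≃ Fin (Fintype.card V)) → Prop) [DecidablePred p] :
    (Finset.univ.filter (fun σ => p (g.trans σ))).card = (Finset.univ.filter p).card := by
  apply Finset.card_bij' (fun σ _ => g.trans σ) (fun σ _ => g.symm.trans σ)
  · intro σ hσ; simpa using (Finset.mem_filter.mp hσ).2
  · intro σ hσ
    simp only [Finset.mem_filter, Finset.mem_univ, true_and]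
    have : g.trans (g.symm.trans σ) = σ := by ext x; simp
    rw [this]
    exact (Finset.mem_filter.mp hσ).2
  · intro σ _; ext x; simp
  · intro σ _; ext x; simp

lemma cardF_comp (g : V ≃ V) (a b c : V) : cardF (g a) (g b) (g c) = cardF a b c := by
  unfold cardF
  have := comp_card g (fun σ : V ≃ Fin (Fintype.card V) => σ a < σ b ∧ σ b < σ c)
  exact this

lemma three_cardF {u v w : V} (huv : u ≠ v) (hvw : v ≠ w) (huw : u ≠ w) :
    3 * (cardF u v w + cardF w v u) = Fintype.card (V ≃ Fin (Fintype.card V)) := by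
  have e1 : cardF u w v = cardF u v w := by
    have := cardF_comp (Equiv.swap v w) u v w
    simpa [Equiv.swap_apply_of_ne_of_ne, huv, huw] using this
  have e2 : cardF v u w = cardF u v w := by
    have := cardF_comp (Equiv.swap u v) u v w
    simpa [Equiv.swap_apply_of_ne_of_ne, huw.symm, hvw.symm] using this
  have e3 : cardF w v u = cardF u v w := by
    have := cardF_comp (Equiv.swap u w) u v w
    simpa [Equiv.swap_apply_of_ne_of_ne, huv.symm, hvw] using this
  have e4 : cardF v w u = cardF u v w := by
    have := cardF_comp ((Equiv.swap v w).trans (Equiv.swap u v)) u v w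
    simpa [Equiv.trans_apply, Equiv.swap_apply_of_ne_of_ne, huv, huw, hvw.symm,
      huw.symm, huv.symm, hvw] using this
  have e5 : cardF w u v = cardF u v w := by
    have := cardF_comp ((Equiv.swap u v).trans (Equiv.swap v w)) u v w
    simpa [Equiv.trans_apply, Equiv.swap_apply_of_ne_of_ne, huv, huw, hvw.symm,
      huw.symm, huv.symm, hvw] using this
  have key : ∀ σ : V ≃ Fin (Fintype.card V),
      ((if σ u < σ v ∧ σ v < σ w then 1 else 0) + (if σ u < σ w ∧ σ w < σ v then 1 else 0)
      + (if σ v < σ u ∧ σ u < σ w then 1 else 0) + (if σ v < σ w ∧ σ w < σ u then 1 else 0)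
      + (if σ w < σ u ∧ σ u < σ v then 1 else 0) + (if σ w < σ v ∧ σ v < σ u then 1 else 0)) = 1 := by
    intro σ
    have h1 : ((σ u : Fin _) : ℕ) ≠ ((σ v : Fin _) : ℕ) :=
      fun hh => huv (σ.injective (Fin.val_injective hh))
    have h2 : ((σ v : Fin _) : ℕ) ≠ ((σ w : Fin _) : ℕ) :=
      fun hh => hvw (σ.injective (Fin.val_injective hh))
    have h3 : ((σ u : Fin _) : ℕ) ≠ ((σ w : Fin _) : ℕ) :=
      fun hh => huw (σ.injective (Fin.val_injective hh))
    simp only [Fin.lt_def]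
    split_ifs <;> omega
  have total : cardF u v w + cardF u w v + cardF v u w + cardF v w u + cardF w u v + cardF w v u
      = Fintype.card (V ≃ Fin (Fintype.card V)) := by
    simp only [cardF, Finset.card_filter]
    rw [← Finset.sum_add_distrib, ← Finset.sum_add_distrib, ← Finset.sum_add_distrib,
        ← Finset.sum_add_distrib, ← Finset.sum_add_distrib]
    rw [Finset.sum_congr rfl (fun σ _ => key σ)]
    simp
  rw [← total, e1, e2, e3, e4, e5]; ring

/-- The condition that `p.1` is a left edge and `p.2` a right edge at `v`. -/
abbrev Cnd (G : Multigraph V E) (σ : V ≃ Fin (Fintype.card V)) (v : V) (p : E × E) : Prop :=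
  ((G.fst p.1 = v ∧ σ (G.snd p.1) < σ v) ∨ (G.snd p.1 = v ∧ σ (G.fst p.1) < σ v)) ∧
  ((G.fst p.2 = v ∧ σ v < σ (G.snd p.2)) ∨ (G.snd p.2 = v ∧ σ v < σ (G.fst p.2)))

lemma key_pair (G : Multigraph V E) (τ : V ≃ Fin (Fintype.card V)) (v : V) (p : E × E)
    (h : Cnd G τ v p) :
    ∃ u w : V, u ≠ v ∧ v ≠ w ∧ u ≠ w ∧
      (∀ σ, Cnd G σ v p ↔ (σ u < σ v ∧ σ v < σ w)) ∧
      (∀ σ, Cnd G σ v p.swap ↔ (σ w < σ v ∧ σ v < σ u)) := by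
  obtain ⟨e, e'⟩ := p
  obtain ⟨hL, hR⟩ := h
  have lo1 := G.loopless e
  have lo2 := G.loopless e'
  rcases hL with ⟨h1, h2⟩ | ⟨h1, h2⟩ <;> rcases hR with ⟨h3, h4⟩ | ⟨h3, h4⟩
  · refine ⟨G.snd e, G.snd e', fun hh => lo1 (h1.trans hh.symm), fun hh => lo2 (h3.trans hh),
      fun hh => absurd (congrArg τ hh) (ne_of_lt (h2.trans h4)), ?_, ?_⟩ <;> intro σ <;>
      simp [Cnd, h1, h3, show G.snd e ≠ v from fun hh => lo1 (h1.trans hh.symm),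
        show G.snd e' ≠ v from fun hh => lo2 (h3.trans hh.symm)]
  · refine ⟨G.snd e, G.fst e', fun hh => lo1 (h1.trans hh.symm), fun hh => lo2 (hh.symm.trans h3.symm),
      fun hh => absurd (congrArg τ hh) (ne_of_lt (h2.trans h4)), ?_, ?_⟩ <;> intro σ <;>
      simp [Cnd, h1, h3, show G.snd e ≠ v from fun hh => lo1 (h1.trans hh.symm),
        show G.fst e' ≠ v from fun hh => lo2 (hh.trans h3.symm)]
  · refine ⟨G.fst e, G.snd e', fun hh => lo1 (hh.trans h1.symm), fun hh => lo2 (h3.trans hh),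
      fun hh => absurd (congrArg τ hh) (ne_of_lt (h2.trans h4)), ?_, ?_⟩ <;> intro σ <;>
      simp [Cnd, h1, h3, show G.fst e ≠ v from fun hh => lo1 (hh.trans h1.symm),
        show G.snd e' ≠ v from fun hh => lo2 (h3.trans hh.symm)]
  · refine ⟨G.fst e, G.fst e', fun hh => lo1 (hh.trans h1.symm), fun hh => lo2 (hh.symm.trans h3.symm),
      fun hh => absurd (congrArg τ hh) (ne_of_lt (h2.trans h4)), ?_, ?_⟩ <;> intro σ <;>
      simp [Cnd, h1, h3, show G.fst e ≠ v from fun hh => lo1 (hh.trans h1.symm),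
        show G.fst e' ≠ v from fun hh => lo2 (hh.trans h3.symm)]

lemma per_v (G : Multigraph V E) (τ : V ≃ Fin (Fintype.card V)) (v : V) :
    Fintype.card (V ≃ Fin (Fintype.card V)) * (Finset.univ.filter (Cnd G τ v)).card ≤
      3 * ∑ σ : V ≃ Fin (Fintype.card V), (Finset.univ.filter (Cnd G σ v)).card := by
  classical
  set gv : E × E → ℕ :=
    fun p => (Finset.univ.filter (fun σ : V ≃ Fin (Fintype.card V) => Cnd G σ v p)).card with hgv
  have hRHS : ∑ σ : V ≃ Fin (Fintype.card V), (Finset.univ.filter (Cnd G σ v)).card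
      = ∑ p : E × E, gv p := by
    simp only [Finset.card_filter, hgv]
    rw [Finset.sum_comm]
  set T := Finset.univ.filter (Cnd G τ v) with hT
  have hdis : Disjoint T (T.image Prod.swap) := by
    rw [Finset.disjoint_left]
    intro p hp hp'
    obtain ⟨q, hq, hqp⟩ := Finset.mem_image.mp hp'
    obtain ⟨u, w, _, _, _, hiff, hswap⟩ := key_pair G τ v q (Finset.mem_filter.mp hq).2
    have h1 := (hiff τ).mp (Finset.mem_filter.mp hq).2
    have h2 := (hswap τ).mp (by rw [← hqp] at hp; exact (Finset.mem_filter.mp hp).2)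
    exact absurd h1.1 (asymm h2.2)
  have key : ∀ p ∈ T, Fintype.card (V ≃ Fin (Fintype.card V)) = 3 * (gv p + gv p.swap) := by
    intro p hp
    obtain ⟨u, w, huv, hvw, huw, hiff, hswap⟩ := key_pair G τ v p (Finset.mem_filter.mp hp).2
    have h1 : gv p = cardF u v w := by
      simp only [hgv, cardF]
      congr 1
      exact Finset.filter_congr (fun σ _ => hiff σ)
    have h2 : gv p.swap = cardF w v u := by
      simp only [hgv, cardF]
      congr 1
      exact Finset.filter_congr (fun σ _ => hswap σ)
    rw [h1, h2, three_cardF huv hvw huw]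
  calc Fintype.card (V ≃ Fin (Fintype.card V)) * T.card
      = ∑ p ∈ T, Fintype.card (V ≃ Fin (Fintype.card V)) := by
        rw [Finset.sum_const, smul_eq_mul, mul_comm]
    _ = ∑ p ∈ T, 3 * (gv p + gv p.swap) := Finset.sum_congr rfl key
    _ = 3 * (∑ p ∈ T, gv p + ∑ p ∈ T, gv p.swap) := by
        rw [← Finset.mul_sum, Finset.sum_add_distrib]
    _ = 3 * (∑ p ∈ T, gv p + ∑ p ∈ T.image Prod.swap, gv p) := by
        rw [Finset.sum_image (fun x _ y _ hxy => Prod.swap_injective hxy)]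
    _ = 3 * ∑ p ∈ T ∪ T.image Prod.swap, gv p := by rw [Finset.sum_union hdis]
    _ ≤ 3 * ∑ p : E × E, gv p :=
        Nat.mul_le_mul_left _ (Finset.sum_le_sum_of_subset (Finset.subset_univ _))
    _ = 3 * ∑ σ : V ≃ Fin (Fintype.card V), (Finset.univ.filter (Cnd G σ v)).card := by
        rw [hRHS]

lemma prod_eq_card (G : Multigraph V E) (σ : V ≃ Fin (Fintype.card V)) (v : V) :
    G.leftDeg σ v * G.rightDeg σ v = (Finset.univ.filter (Cnd G σ v)).card := by
  rw [Multigraph.leftDeg, Multigraph.rightDeg, ← Finset.card_product]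
  congr 1
  ext p
  simp only [Finset.mem_product, Finset.mem_filter, Finset.mem_univ, true_and, Cnd]

/-- `leftdeg(v)·rightdeg(v)` counts the length-two paths through `v` split by
`v` in the ordering, and a uniformly random ordering is a `3`-approximation in
expectation for maximizing `∑ leftdeg(v)·rightdeg(v)`. -/
theorem random_order_three_approx (G : Multigraph V E) :
    (∀ (σ : V ≃ Fin (Fintype.card V)) (v : V),
      G.leftDeg σ v * G.rightDeg σ v =
        (Finset.univ.filter (fun p : E × E =>
          ((G.fst p.1 = v ∧ σ (G.snd p.1) < σ v) ∨
            (G.snd p.1 = v ∧ σ (G.fst p.1) < σ v)) ∧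
          ((G.fst p.2 = v ∧ σ v < σ (G.snd p.2)) ∨
            (G.snd p.2 = v ∧ σ v < σ (G.fst p.2))))).card) ∧
    ∀ τ : V ≃ Fin (Fintype.card V),
      (∑ v : V, (G.leftDeg τ v * G.rightDeg τ v : ℝ)) ≤
        3 * ((∑ σ : V ≃ Fin (Fintype.card V),
                ∑ v : V, (G.leftDeg σ v * G.rightDeg σ v : ℝ)) /
              (Fintype.card (V ≃ Fin (Fintype.card V)) : ℝ)) := by
  constructor
  · intro σ v
    exact prod_eq_card G σ v
  · intro τ
    have hN : (0:ℝ) < (Fintype.card (V ≃ Fin (Fintype.card V)) : ℝ) := by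
      exact_mod_cast Fintype.card_pos_iff.mpr ⟨Fintype.equivFin V⟩
    rw [← mul_div_assoc, le_div_iff₀ hN]
    have main : (∑ v : V, G.leftDeg τ v * G.rightDeg τ v) *
        Fintype.card (V ≃ Fin (Fintype.card V)) ≤
        3 * ∑ σ : V ≃ Fin (Fintype.card V), ∑ v : V, G.leftDeg σ v * G.rightDeg σ v := by
      calc (∑ v : V, G.leftDeg τ v * G.rightDeg τ v) * Fintype.card (V ≃ Fin (Fintype.card V))
          = ∑ v : V, Fintype.card (V ≃ Fin (Fintype.card V)) *
              (Finset.univ.filter (Cnd G τ v)).card := by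
            rw [Finset.sum_mul]
            exact Finset.sum_congr rfl fun v _ => by rw [prod_eq_card, mul_comm]
        _ ≤ ∑ v : V, 3 * ∑ σ : V ≃ Fin (Fintype.card V), (Finset.univ.filter (Cnd G σ v)).card :=
            Finset.sum_le_sum fun v _ => per_v G τ v
        _ = 3 * ∑ σ : V ≃ Fin (Fintype.card V), ∑ v : V, G.leftDeg σ v * G.rightDeg σ v := by
            rw [← Finset.mul_sum, Finset.sum_comm]
            congr 1
            exact Finset.sum_congr rfl fun σ _ => Finset.sum_congr rfl
              fun v _ => (prod_eq_card G σ v).symm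
    exact_mod_cast main
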